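/- Let F be a field, S ⊆ F a finite nonempty subset, A ∈ F^{m×n} and B ∈ F^{m×p}. Suppose there is no matrix X ∈ F^{n×p} with A·X = B. Then, for a vector x chosen uniformly at random from S^p, the probability that B·x lies in the column space of A (i.e., that there exists y ∈ F^n with A·y = B·x) is at most 1/|S|. -/

import Mathlib

open Matrix

open Classical in
/-- if `A·X = B` has no solution, then for `x` uniform over `S^p` the
probability that `B·x` lies in the column space of `A` is at most `1/|S|`, expressed
as: `#{x ∈ S^p | ∃ y, A·y = B·x} · |S| ≤ |S^p|`. -/
theorem prob_Bx_in_colspace_le {F : Type*} [Field F] {m n p : ℕ}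
    (S : Finset F) (hS : S.Nonempty)
    (A : Matrix (Fin m) (Fin n) F) (B : Matrix (Fin m) (Fin p) F)
    (hnoX : ¬ ∃ X : Matrix (Fin n) (Fin p) F, A * X = B) :
    ((Fintype.piFinset fun _ : Fin p => S).filter
        fun x => ∃ y : Fin n → F, A.mulVec y = B.mulVec x).card * S.card ≤
      (Fintype.piFinset fun _ : Fin p => S).card := by
  -- find a column j of B not in the column space of A
  have hj : ∃ j : Fin p, ¬ ∃ y : Fin n → F, A.mulVec y = fun i => B i j := by
    by_contra h
    push_neg at h
    apply hnoX
    choose Y hY using h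
    refine ⟨Matrix.of fun i j => Y j i, ?_⟩
    ext i j
    have := congrFun (hY j) i
    simpa [Matrix.mul_apply, Matrix.mulVec, dotProduct] using this
  obtain ⟨j, hjcol⟩ := hj
  -- key: two elements of the filtered set agreeing off j are equal
  have key : ∀ x x', (∃ y, A.mulVec y = B.mulVec x) → (∃ y, A.mulVec y = B.mulVec x') →
      (∀ i, i ≠ j → x i = x' i) → x j = x' j := by
    rintro x x' ⟨y, hy⟩ ⟨y', hy'⟩ hoff
    by_contra hne
    apply hjcol
    set c : F := x j - x' j with hc
    have hc0 : c ≠ 0 := sub_ne_zero.mpr hne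
    have hxx : x - x' = Pi.single j c := by
      funext i
      by_cases hi : i = j
      · subst hi; simp [hc]
      · simp [Pi.single, Function.update, hi, hoff i hi]
    have hAB : A.mulVec (y - y') = B.mulVec (Pi.single j c) := by
      rw [← hxx, Matrix.mulVec_sub, Matrix.mulVec_sub, hy, hy']
    refine ⟨c⁻¹ • (y - y'), ?_⟩
    funext i
    have := congrFun hAB i
    rw [Matrix.mulVec_smul]
    simp only [Pi.smul_apply, this, Matrix.mulVec_single, smul_eq_mul]
    field_simp
    simp [Matrix.col_apply, op_smul_eq_mul, mul_comm]
  -- counting via injection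
  classical
  set T := (Fintype.piFinset fun _ : Fin p => S).filter
      fun x => ∃ y : Fin n → F, A.mulVec y = B.mulVec x with hT
  have : (T ×ˢ S).card ≤ (Fintype.piFinset fun _ : Fin p => S).card := by
    apply Finset.card_le_card_of_injOn (fun q => Function.update q.1 j q.2)
    · rintro ⟨x, s⟩ hq
      rw [Finset.mem_coe, Finset.mem_product] at hq
      obtain ⟨hx, hs⟩ := hq
      rw [hT, Finset.mem_filter] at hx
      rw [Finset.mem_coe, Fintype.mem_piFinset]
      intro i
      by_cases hi : i = j
      · subst hi; simpa using hs
      · dsimp only; rw [Function.update_of_ne hi]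
        exact Fintype.mem_piFinset.mp hx.1 i
    · rintro ⟨x, s⟩ hq ⟨x', s'⟩ hq' heq
      rw [Finset.mem_coe, Finset.mem_product, hT, Finset.mem_filter] at hq hq'
      have hs : s = s' := by
        have := congrFun heq j
        simpa using this
      have hoff : ∀ i, i ≠ j → x i = x' i := by
        intro i hi
        have := congrFun heq i
        simpa [Function.update_of_ne hi] using this
      have hxj : x j = x' j := key x x' hq.1.2 hq'.1.2 hoff
      have hx : x = x' := by
        funext i
        by_cases hi : i = j
        · subst hi; exact hxj
        · exact hoff i hi
      simp [hx, hs]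
  simpa [Finset.card_product] using this
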